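/- In a regular category C, let f_A : A₁ → A₀, f_B : B₁ → B₀ and f_C : C₁ → C₀ be regular epimorphisms, let α = (α_⊤, α_⊥) : f_A → f_B be a commutative square all four of whose sides are regular epimorphisms, and let β = (β_⊤, β_⊥) : f_B → f_C be a commutative square. If the composite square β ∘ α = (β_⊤ ∘ α_⊤, β_⊥ ∘ α_⊥) : f_A → f_C is a double extension, then β is a double extension. -/

import Mathlib

open CategoryTheory CategoryTheory.Limits

universe v u

namespace Paper

variable {C : Type u} [Category.{v} C]

/-- `f` is a regular epimorphism. -/
def IsRegEpi {X Y : C} (f : X ⟶ Y) : Prop := Nonempty (RegularEpi f)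

/-- A regular category: a finitely complete category with coequalizers of kernel pairs in
which regular epimorphisms are stable under pullback. -/
class RegularCat (C : Type u) [Category.{v} C] [HasFiniteLimits C] : Prop where
  hasCoeqOfKernelPairs : ∀ {X Y : C} (f : X ⟶ Y),
    HasCoequalizer (pullback.fst f f) (pullback.snd f f)
  regEpiPullbackStable : ∀ {X Y Z : C} (f : X ⟶ Y) (g : Z ⟶ Y),
    IsRegEpi f → IsRegEpi (pullback.snd f g)

/-- An internal equivalence relation given by a parallel pair `r₁ r₂ : R ⟶ X`. -/
structure IsEquivRel [HasFiniteLimits C] {R X : C} (r₁ r₂ : R ⟶ X) : Prop where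
  jointlyMono : Mono (prod.lift r₁ r₂)
  refl : ∃ d : X ⟶ R, d ≫ r₁ = 𝟙 X ∧ d ≫ r₂ = 𝟙 X
  symm : ∃ s : R ⟶ R, s ≫ r₁ = r₂ ∧ s ≫ r₂ = r₁
  trans : ∃ t : pullback r₂ r₁ ⟶ R,
    t ≫ r₁ = pullback.fst r₂ r₁ ≫ r₁ ∧ t ≫ r₂ = pullback.snd r₂ r₁ ≫ r₂

/-- A Barr exact category: a regular category in which every internal equivalence relation
is effective (i.e. is a kernel pair). -/
class BarrExact (C : Type u) [Category.{v} C] [HasFiniteLimits C] : Prop extends RegularCat C where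
  equivRelEffective : ∀ {R X : C} (r₁ r₂ : R ⟶ X), IsEquivRel r₁ r₂ →
    ∃ (Y : C) (f : X ⟶ Y), IsKernelPair f r₁ r₂

section DoubleExt
variable [HasFiniteLimits C]

/-- A double extension: a commutative square `αt ≫ fB = fA ≫ αb` of regular epimorphisms
whose comparison morphism to the pullback is also a regular epimorphism. -/
structure IsDoubleExt {A₁ A₀ B₁ B₀ : C} (fA : A₁ ⟶ A₀) (fB : B₁ ⟶ B₀)
    (αt : A₁ ⟶ B₁) (αb : A₀ ⟶ B₀) : Prop where
  w : αt ≫ fB = fA ≫ αb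
  left : IsRegEpi fA
  right : IsRegEpi fB
  top : IsRegEpi αt
  bot : IsRegEpi αb
  comparison : IsRegEpi (pullback.lift fA αt w.symm : A₁ ⟶ pullback αb fB)

end DoubleExt

/-- The category `Ext C` of extensions: the full subcategory of the arrow category of `C`
determined by the regular epimorphisms. -/
abbrev ExtCat (C : Type u) [Category.{v} C] : Type max u v :=
  ObjectProperty.FullSubcategory (fun f : Arrow C => IsRegEpi f.hom)

/-- An object of `Ext C` from a regular epimorphism. -/
def ExtCat.mk' {X Y : C} (f : X ⟶ Y) (hf : IsRegEpi f) : ExtCat C :=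
  ⟨Arrow.mk f, hf⟩

/-- The top (domain) component of a morphism of `Ext C`. -/
def ExtCat.homLeft {f g : ExtCat C} (φ : f ⟶ g) : f.obj.left ⟶ g.obj.left :=
  CommaMorphism.left φ.hom

/-- The bottom (codomain) component of a morphism of `Ext C`. -/
def ExtCat.homRight {f g : ExtCat C} (φ : f ⟶ g) : f.obj.right ⟶ g.obj.right :=
  CommaMorphism.right φ.hom

lemma ExtCat.homLeft_comp {f g h : ExtCat C} (a : f ⟶ g) (b : g ⟶ h) :
    ExtCat.homLeft (a ≫ b) = ExtCat.homLeft a ≫ ExtCat.homLeft b := rfl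

lemma ExtCat.homRight_comp {f g h : ExtCat C} (a : f ⟶ g) (b : g ⟶ h) :
    ExtCat.homRight (a ≫ b) = ExtCat.homRight a ≫ ExtCat.homRight b := rfl

lemma ExtCat.hom_w {f g : ExtCat C} (φ : f ⟶ g) :
    ExtCat.homLeft φ ≫ g.obj.hom = f.obj.hom ≫ ExtCat.homRight φ :=
  CommaMorphism.w φ.hom

/-- A morphism of `Ext C` from a commutative square in `C`. -/
def ExtCat.homMk' {X₁ X₀ Y₁ Y₀ : C} {f : X₁ ⟶ X₀} {g : Y₁ ⟶ Y₀}
    {hf : IsRegEpi f} {hg : IsRegEpi g}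
    (u : X₁ ⟶ Y₁) (v : X₀ ⟶ Y₀) (w : u ≫ g = f ≫ v) :
    ExtCat.mk' f hf ⟶ ExtCat.mk' g hg :=
  ObjectProperty.homMk (Arrow.homMk (u := u) (v := v) w)

/-- A (commutative) square in `C`, with left vertical `left : A₁ ⟶ A₀`, right vertical
`right : B₁ ⟶ B₀`, top horizontal `top : A₁ ⟶ B₁` and bottom horizontal `bot : A₀ ⟶ B₀`. -/
structure Sq (C : Type u) [Category.{v} C] where
  A₁ : C
  A₀ : C
  B₁ : C
  B₀ : C
  left : A₁ ⟶ A₀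
  right : B₁ ⟶ B₀
  top : A₁ ⟶ B₁
  bot : A₀ ⟶ B₀
  w : top ≫ right = left ≫ bot

/-- The square is a double extension. -/
def Sq.IsDE [HasFiniteLimits C] (s : Sq C) : Prop :=
  IsDoubleExt s.left s.right s.top s.bot

/-- A commutative cube, presented as a morphism of squares `Φ : s ⟶ t`. -/
structure SqHom (s t : Sq C) where
  h₁₁ : s.A₁ ⟶ t.A₁
  h₁₀ : s.A₀ ⟶ t.A₀
  h₀₁ : s.B₁ ⟶ t.B₁
  h₀₀ : s.B₀ ⟶ t.B₀
  wA : h₁₁ ≫ t.left = s.left ≫ h₁₀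
  wB : h₀₁ ≫ t.right = s.right ≫ h₀₀
  wt : h₁₁ ≫ t.top = s.top ≫ h₀₁
  wb : h₁₀ ≫ t.bot = s.bot ≫ h₀₀

/-- Composition of cubes (as morphisms of squares). -/
def SqHom.comp {s t u : Sq C} (Φ : SqHom s t) (Ψ : SqHom t u) : SqHom s u where
  h₁₁ := Φ.h₁₁ ≫ Ψ.h₁₁
  h₁₀ := Φ.h₁₀ ≫ Ψ.h₁₀
  h₀₁ := Φ.h₀₁ ≫ Ψ.h₀₁
  h₀₀ := Φ.h₀₀ ≫ Ψ.h₀₀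
  wA := by rw [Category.assoc, Ψ.wA, ← Category.assoc, Φ.wA, Category.assoc]
  wB := by rw [Category.assoc, Ψ.wB, ← Category.assoc, Φ.wB, Category.assoc]
  wt := by rw [Category.assoc, Ψ.wt, ← Category.assoc, Φ.wt, Category.assoc]
  wb := by rw [Category.assoc, Ψ.wb, ← Category.assoc, Φ.wb, Category.assoc]

section Cube
variable [HasFiniteLimits C]

/-- Seen as a morphism `(σ, β) : s ⟶ t` between the double extensions `s` (as the arrow
`s.left → s.right`) and `t`, the face `σ` of the cube: the square from `s.left` to `t.left`. -/
def SqHom.sigmaSq {s t : Sq C} (Φ : SqHom s t) : Sq C where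
  A₁ := s.A₁
  A₀ := s.A₀
  B₁ := t.A₁
  B₀ := t.A₀
  left := s.left
  right := t.left
  top := Φ.h₁₁
  bot := Φ.h₁₀
  w := Φ.wA

/-- The face `β` of the cube: the square from `s.right` to `t.right`. -/
def SqHom.betaSq {s t : Sq C} (Φ : SqHom s t) : Sq C where
  A₁ := s.B₁
  A₀ := s.B₀
  B₁ := t.B₁
  B₀ := t.B₀
  left := s.right
  right := t.right
  top := Φ.h₀₁
  bot := Φ.h₀₀
  w := Φ.wB

/-- Top component of the componentwise pullback of `t` (i.e. `α`) and `betaSq Φ` (i.e. `β`). -/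
noncomputable def SqHom.P₁ {s t : Sq C} (Φ : SqHom s t) : C := pullback t.top Φ.h₀₁

/-- Bottom component of the componentwise pullback of `α` and `β`. -/
noncomputable def SqHom.P₀ {s t : Sq C} (Φ : SqHom s t) : C := pullback t.bot Φ.h₀₀

/-- The induced arrow between the components of the componentwise pullback of `α` and `β`. -/
noncomputable def SqHom.fP {s t : Sq C} (Φ : SqHom s t) : Φ.P₁ ⟶ Φ.P₀ :=
  pullback.map t.top Φ.h₀₁ t.bot Φ.h₀₀ t.left s.right t.right t.w Φ.wB

/-- The top comparison morphism. -/
noncomputable def SqHom.c₁ {s t : Sq C} (Φ : SqHom s t) : s.A₁ ⟶ Φ.P₁ :=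
  pullback.lift Φ.h₁₁ s.top Φ.wt

/-- The bottom comparison morphism. -/
noncomputable def SqHom.c₀ {s t : Sq C} (Φ : SqHom s t) : s.A₀ ⟶ Φ.P₀ :=
  pullback.lift Φ.h₁₀ s.bot Φ.wb

lemma SqHom.comp_w {s t : Sq C} (Φ : SqHom s t) : Φ.c₁ ≫ Φ.fP = s.left ≫ Φ.c₀ := by
  apply pullback.hom_ext
  · simp only [SqHom.c₁, SqHom.c₀, SqHom.fP, SqHom.P₁, SqHom.P₀, Category.assoc, pullback.map,
      pullback.lift_fst, pullback.lift_fst_assoc]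
    exact Φ.wA
  · simp only [SqHom.c₁, SqHom.c₀, SqHom.fP, SqHom.P₁, SqHom.P₀, Category.assoc, pullback.map,
      pullback.lift_snd, pullback.lift_snd_assoc]
    exact s.w

/-- The comparison square of the cube `Φ`, from `s.left` to the componentwise pullback
of `α` and `β`. -/
noncomputable def SqHom.compSq {s t : Sq C} (Φ : SqHom s t) : Sq C where
  A₁ := s.A₁
  A₀ := s.A₀
  B₁ := Φ.P₁
  B₀ := Φ.P₀
  left := s.left
  right := Φ.fP
  top := Φ.c₁
  bot := Φ.c₀
  w := Φ.comp_w

/-- A `3`-cubical extension: the two opposite faces `γ = s` and `α = t`, the two connecting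
faces `σ` and `β`, and the comparison square to the componentwise pullback of `α` and `β`
are all double extensions. -/
def SqHom.Is3CubExt {s t : Sq C} (Φ : SqHom s t) : Prop :=
  s.IsDE ∧ t.IsDE ∧ Φ.sigmaSq.IsDE ∧ Φ.betaSq.IsDE ∧ Φ.compSq.IsDE

end Cube

/-- The cube `Φ : s ⟶ t` is a limit cube: the cone from the initial vertex `s.A₁` on the
diagram formed by the remaining seven vertices is a limit cone. -/
def SqHom.IsLimitCube {s t : Sq C} (Φ : SqHom s t) : Prop :=
  ∀ (W : C) (wA₀ : W ⟶ s.A₀) (wB₁ : W ⟶ s.B₁) (wtA₁ : W ⟶ t.A₁),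
    wA₀ ≫ s.bot = wB₁ ≫ s.right →
    wA₀ ≫ Φ.h₁₀ = wtA₁ ≫ t.left →
    wB₁ ≫ Φ.h₀₁ = wtA₁ ≫ t.top →
    ∃! u : W ⟶ s.A₁, u ≫ s.left = wA₀ ∧ u ≫ s.top = wB₁ ∧ u ≫ Φ.h₁₁ = wtA₁

/-- A discrete fibration (of order 3): a `3`-cubical extension which is a limit cube. -/
def SqHom.IsDiscFib [HasFiniteLimits C] {s t : Sq C} (Φ : SqHom s t) : Prop :=
  Φ.Is3CubExt ∧ Φ.IsLimitCube
section Galois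
variable [HasFiniteLimits C]

/-- A strongly E-Birkhoff Galois structure on `C`: a full replete reflective subcategory
(given by the predicate `inB`, the reflector `F` and the unit `η`) such that every unit
component is a regular epimorphism and every naturality square of the unit at a regular
epimorphism is a double extension. -/
structure BirkhoffStructure (C : Type u) [Category.{v} C] [HasFiniteLimits C] where
  inB : C → Prop
  replete : ∀ {X Y : C}, inB X → (X ≅ Y) → inB Y
  F : C ⥤ C
  η : 𝟭 C ⟶ F
  obj_inB : ∀ A : C, inB (F.obj A)
  unit_regEpi : ∀ A : C, IsRegEpi (η.app A)
  univ : ∀ {A X : C}, inB X → ∀ g : A ⟶ X, ∃! h : F.obj A ⟶ X, η.app A ≫ h = g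
  stronglyBirkhoff : ∀ {A B : C} (f : A ⟶ B), IsRegEpi f →
    IsDoubleExt f (F.map f) (η.app A) (η.app B)

/-- A trivial covering: a regular epimorphism whose unit naturality square is a pullback. -/
def TrivialCovering (G : BirkhoffStructure C) {T E : C} (t : T ⟶ E) : Prop :=
  IsRegEpi t ∧ IsPullback (G.η.app T) t (G.F.map t) (G.η.app E)

/-- A covering: a regular epimorphism whose pullback along some regular epimorphism is a
trivial covering. -/
def Covering (G : BirkhoffStructure C) {A B : C} (c : A ⟶ B) : Prop :=
  IsRegEpi c ∧ ∃ (E : C) (e : E ⟶ B), IsRegEpi e ∧ TrivialCovering G (pullback.snd c e)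

end Galois

/-- The underlying square in `C` of a morphism of `Ext C`. -/
def sqOfHom {f g : ExtCat C} (φ : f ⟶ g) : Sq C where
  A₁ := f.obj.left
  A₀ := f.obj.right
  B₁ := g.obj.left
  B₀ := g.obj.right
  left := f.obj.hom
  right := g.obj.hom
  top := ExtCat.homLeft φ
  bot := ExtCat.homRight φ
  w := ExtCat.hom_w φ

/-- The underlying cube in `C` of a naturality square in `Ext C` of a natural
transformation `η₁ : 𝟭 (Ext C) ⟶ F₁` at a morphism `φ : f ⟶ g` of `Ext C`. -/
def natCube (F₁ : ExtCat C ⥤ ExtCat C) (η₁ : 𝟭 (ExtCat C) ⟶ F₁) {f g : ExtCat C}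
    (φ : f ⟶ g) : SqHom (sqOfHom φ) (sqOfHom (F₁.map φ)) where
  h₁₁ := ExtCat.homLeft (η₁.app f)
  h₁₀ := ExtCat.homRight (η₁.app f)
  h₀₁ := ExtCat.homLeft (η₁.app g)
  h₀₀ := ExtCat.homRight (η₁.app g)
  wA := ExtCat.hom_w (η₁.app f)
  wB := ExtCat.hom_w (η₁.app g)
  wt := by
    have h := congrArg ExtCat.homLeft (η₁.naturality φ)
    rw [ExtCat.homLeft_comp, ExtCat.homLeft_comp] at h
    exact h.symm
  wb := by
    have h := congrArg ExtCat.homRight (η₁.naturality φ)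
    rw [ExtCat.homRight_comp, ExtCat.homRight_comp] at h
    exact h.symm

section LevelOne
variable [HasFiniteLimits C]

/-- The level-one Galois structure induced by a strongly E-Birkhoff Galois structure `G`:
the coverings form a reflective subcategory of `Ext C`, with reflector `F₁` and unit `η₁`,
every unit component is a double extension, and the reflection is strongly E₂-Birkhoff. -/
structure LevelOne (G : BirkhoffStructure C) where
  F₁ : ExtCat C ⥤ ExtCat C
  η₁ : 𝟭 (ExtCat C) ⟶ F₁
  obj_cov : ∀ f : ExtCat C, Covering G (F₁.obj f).obj.hom
  univ : ∀ {f x : ExtCat C}, Covering G x.obj.hom → ∀ g : f ⟶ x,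
    ∃! h : F₁.obj f ⟶ x, η₁.app f ≫ h = g
  unit_DE : ∀ f : ExtCat C, (sqOfHom (η₁.app f)).IsDE
  stronglyBirkhoff : ∀ {f g : ExtCat C} (φ : f ⟶ g), (sqOfHom φ).IsDE →
    (natCube F₁ η₁ φ).Is3CubExt

/-- A trivial double covering: a morphism of `Ext C` whose underlying square is a double
extension and whose `η₁`-naturality square is a pullback in `Ext C`. -/
def TrivDoubleCov {G : BirkhoffStructure C} (L : LevelOne G) {f g : ExtCat C}
    (φ : f ⟶ g) : Prop :=
  (sqOfHom φ).IsDE ∧ IsPullback (L.η₁.app f) φ (L.F₁.map φ) (L.η₁.app g)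

/-- A double covering: a double extension `α : d ⟶ c` in `Ext C` such that the pullback of
`α` along some double extension `γ : e ⟶ c` is a trivial double covering. -/
def DoubleCov {G : BirkhoffStructure C} (L : LevelOne G) {d c : ExtCat C}
    (α : d ⟶ c) : Prop :=
  (sqOfHom α).IsDE ∧ ∃ (e : ExtCat C) (γ : e ⟶ c), (sqOfHom γ).IsDE ∧
    ∃ (p : ExtCat C) (pγ : p ⟶ e) (pα : p ⟶ d),
      IsPullback pγ pα γ α ∧ TrivDoubleCov L pγ

end LevelOne
section Aux

variable {C : Type u} [Category.{v} C]

lemma epi_of_isRegEpi {X Y : C} {f : X ⟶ Y} (h : IsRegEpi f) : Epi f := by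
  obtain ⟨r⟩ := h; exact RegularEpi.epi f r

/-- If `f` is epi and `f ≫ g` is a regular epi, then `g` is a regular epi. -/
lemma isRegEpi_of_comp {X Y Z : C} (f : X ⟶ Y) (g : Y ⟶ Z) (hf : Epi f)
    (h : IsRegEpi (f ≫ g)) : IsRegEpi g := by
  obtain ⟨r⟩ := h
  haveI := r
  haveI : Epi (f ≫ g) := RegularEpi.epi _ r
  haveI : Epi g := epi_of_epi f g
  refine ⟨⟨r.W, r.left ≫ f, r.right ≫ f, by
    simp only [Category.assoc]; exact r.w, ?_⟩⟩
  refine Cofork.IsColimit.mk' _ fun s => ?_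
  have hs : r.left ≫ f ≫ s.π = r.right ≫ f ≫ s.π := by
    have := s.condition
    simpa only [Category.assoc] using this
  obtain ⟨l, hl⟩ := Cofork.IsColimit.desc' r.isColimit (f ≫ s.π) hs
  have hπ : (f ≫ g) ≫ l = f ≫ s.π := hl
  have : g ≫ l = s.π := by
    rw [Category.assoc] at hπ
    exact (cancel_epi f).1 hπ
  refine ⟨l, this, fun {m} hm => ?_⟩
  rw [Cofork.π_ofπ, ← this] at hm
  exact (cancel_epi g).1 hm

/-- In a regular category, regular epimorphisms are closed under composition. -/
lemma isRegEpi_comp [HasFiniteLimits C] [RegularCat C] {X Y Z : C} {u : X ⟶ Y} {v : Y ⟶ Z}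
    (hu : IsRegEpi u) (hv : IsRegEpi v) : IsRegEpi (u ≫ v) := by
  obtain ⟨ru⟩ := hu
  obtain ⟨rv⟩ := hv
  haveI := ru; haveI := rv
  -- kernel pair of v
  set v1 := pullback.fst v v
  set v2 := pullback.snd v v
  -- two-step pullback
  set b1 := pullback.snd u v1 with hb1
  set a1 := pullback.fst u v1 with ha1
  set b2 := pullback.snd u (b1 ≫ v2) with hb2
  set a2 := pullback.fst u (b1 ≫ v2) with ha2
  have hb1re : IsRegEpi b1 := RegularCat.regEpiPullbackStable u v1 ⟨ru⟩
  have hb2re : IsRegEpi b2 := RegularCat.regEpiPullbackStable u (b1 ≫ v2) ⟨ru⟩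
  haveI : Epi b1 := epi_of_isRegEpi hb1re
  haveI : Epi b2 := epi_of_isRegEpi hb2re
  set t : pullback u (b1 ≫ v2) ⟶ pullback v v := b2 ≫ b1 with ht
  haveI : Epi t := epi_comp b2 b1
  set q1 := b2 ≫ a1 with hq1
  set q2 := a2 with hq2
  have hq1u : q1 ≫ u = t ≫ v1 := by
    rw [hq1, ht, Category.assoc, Category.assoc]
    congr 1
    exact pullback.condition
  have hq2u : q2 ≫ u = t ≫ v2 := by
    rw [hq2, ht, Category.assoc]
    exact pullback.condition
  -- kernel pair of u ≫ v
  set k1 := pullback.fst (u ≫ v) (u ≫ v)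
  set k2 := pullback.snd (u ≫ v) (u ≫ v)
  have hk : k1 ≫ (u ≫ v) = k2 ≫ (u ≫ v) := pullback.condition
  have hvv : v1 ≫ v = v2 ≫ v := pullback.condition
  have hm : q1 ≫ (u ≫ v) = q2 ≫ (u ≫ v) := by
    rw [← Category.assoc, hq1u, ← Category.assoc, hq2u, Category.assoc, Category.assoc, hvv]
    simp only [ht, Category.assoc]
  set m : pullback u (b1 ≫ v2) ⟶ pullback (u ≫ v) (u ≫ v) := pullback.lift q1 q2 hm with hmdef
  have hmk1 : m ≫ k1 = q1 := pullback.lift_fst _ _ _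
  have hmk2 : m ≫ k2 = q2 := pullback.lift_snd _ _ _
  refine ⟨⟨pullback (u ≫ v) (u ≫ v), k1, k2, hk, ?_⟩⟩
  refine Cofork.IsColimit.mk' _ fun s => ?_
  have hscond : k1 ≫ s.π = k2 ≫ s.π := s.condition
  haveI : Epi (u ≫ v) := by
    haveI := RegularEpi.epi u ru; haveI := RegularEpi.epi v rv; exact epi_comp u v
  -- descend along u
  have hKu : (pullback.fst u u) ≫ (u ≫ v) = (pullback.snd u u) ≫ (u ≫ v) := by
    rw [← Category.assoc, pullback.condition, Category.assoc]
  set n : pullback u u ⟶ pullback (u ≫ v) (u ≫ v) :=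
    pullback.lift (pullback.fst u u) (pullback.snd u u) hKu with hndef
  have hu1π : (pullback.fst u u) ≫ s.π = (pullback.snd u u) ≫ s.π := by
    have h1 : n ≫ k1 = pullback.fst u u := pullback.lift_fst _ _ _
    have h2 : n ≫ k2 = pullback.snd u u := pullback.lift_snd _ _ _
    rw [← h1, ← h2, Category.assoc, Category.assoc, hscond]
  have hru : (ru.left : ru.W ⟶ X) ≫ s.π = ru.right ≫ s.π := by
    have hw : ru.left ≫ u = ru.right ≫ u := ru.w
    set l : ru.W ⟶ pullback u u := pullback.lift ru.left ru.right hw with hldef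
    have h1 : l ≫ pullback.fst u u = ru.left := pullback.lift_fst _ _ _
    have h2 : l ≫ pullback.snd u u = ru.right := pullback.lift_snd _ _ _
    rw [← h1, ← h2, Category.assoc, Category.assoc, hu1π]
  obtain ⟨h', hh'⟩ := @RegularEpi.desc' _ _ _ _ _ u ru s.π hru
  -- v1 ≫ h' = v2 ≫ h'
  have hv12 : v1 ≫ h' = v2 ≫ h' := by
    have l1 : t ≫ v1 ≫ h' = q1 ≫ s.π := by
      rw [← Category.assoc, ← hq1u, Category.assoc, hh']
    have l2 : t ≫ v2 ≫ h' = q2 ≫ s.π := by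
      rw [← Category.assoc, ← hq2u, Category.assoc, hh']
    have e1 : t ≫ v1 ≫ h' = t ≫ v2 ≫ h' := by
      rw [l1, l2, ← hmk1, ← hmk2, Category.assoc, Category.assoc, hscond]
    exact (cancel_epi t).1 e1
  have hrv : (rv.left : rv.W ⟶ Y) ≫ h' = rv.right ≫ h' := by
    have hw : rv.left ≫ v = rv.right ≫ v := rv.w
    set l : rv.W ⟶ pullback v v := pullback.lift rv.left rv.right hw with hldef
    have h1 : l ≫ v1 = rv.left := pullback.lift_fst _ _ _
    have h2 : l ≫ v2 = rv.right := pullback.lift_snd _ _ _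
    rw [← h1, ← h2, Category.assoc, Category.assoc, hv12]
  obtain ⟨h'', hh''⟩ := @RegularEpi.desc' _ _ _ _ _ v rv h' hrv
  refine ⟨h'', by rw [Cofork.π_ofπ, Category.assoc, hh'', hh'], fun {w} hw => ?_⟩
  rw [Cofork.π_ofπ] at hw
  have hw2 : (u ≫ v) ≫ w = (u ≫ v) ≫ h'' := by
    rw [hw, Category.assoc, hh'', hh']
  exact (cancel_epi (u ≫ v)).1 hw2

end Aux

/-- In a regular category, if `β ∘ α` is a double extension and `α` is a
commutative square all four of whose sides are regular epimorphisms, then `β` is a double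
extension. -/
theorem statement_0 {C : Type u} [Category.{v} C] [HasFiniteLimits C] [RegularCat C]
    {A₁ A₀ B₁ B₀ X₁ X₀ : C}
    (fA : A₁ ⟶ A₀) (fB : B₁ ⟶ B₀) (fC : X₁ ⟶ X₀)
    (αt : A₁ ⟶ B₁) (αb : A₀ ⟶ B₀) (βt : B₁ ⟶ X₁) (βb : B₀ ⟶ X₀)
    (hfA : IsRegEpi fA) (hfB : IsRegEpi fB) (hfC : IsRegEpi fC)
    (hαt : IsRegEpi αt) (hαb : IsRegEpi αb)
    (wα : αt ≫ fB = fA ≫ αb) (wβ : βt ≫ fC = fB ≫ βb)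
    (h : IsDoubleExt fA fC (αt ≫ βt) (αb ≫ βb)) :
    IsDoubleExt fB fC βt βb := by
  haveI hαtE : Epi αt := epi_of_isRegEpi hαt
  haveI hαbE : Epi αb := epi_of_isRegEpi hαb
  have hβt : IsRegEpi βt := isRegEpi_of_comp αt βt hαtE h.top
  have hβb : IsRegEpi βb := isRegEpi_of_comp αb βb hαbE h.bot
  refine ⟨wβ, hfB, hfC, hβt, hβb, ?_⟩
  have hqre : IsRegEpi ((pullbackRightPullbackFstIso βb fC αb).inv ≫
      pullback.snd αb (pullback.fst βb fC)) := by
    refine isRegEpi_of_comp (pullbackRightPullbackFstIso βb fC αb).hom _ inferInstance ?_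
    rw [← Category.assoc, Iso.hom_inv_id, Category.id_comp]
    exact RegularCat.regEpiPullbackStable αb (pullback.fst βb fC) hαb
  have key : pullback.lift fA (αt ≫ βt) h.w.symm ≫
      ((pullbackRightPullbackFstIso βb fC αb).inv ≫ pullback.snd αb (pullback.fst βb fC)) =
      αt ≫ pullback.lift fB βt wβ.symm := by
    apply pullback.hom_ext
    · simp [wα]
      rw [pullback.lift_fst_assoc, pullback.lift_fst, wα]
    · simp
      rw [pullback.lift_snd, pullback.lift_snd]
  have hcomp : IsRegEpi (αt ≫ pullback.lift fB βt wβ.symm) := by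
    rw [← key]
    exact isRegEpi_comp h.comparison hqre
  exact isRegEpi_of_comp αt _ hαtE hcomp

end Paper
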